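/- The irrationality exponent of Euler's number e is equal to 2: μ(e) = 2. -/

import Mathlib

open Filter

noncomputable section

/-- The `j`-th digit (j ≥ 1) of the base-`b` expansion of the fractional part of `ξ`. -/
def digit (b : ℕ) (ξ : ℝ) (j : ℕ) : ℕ := (⌊Int.fract ξ * (b : ℝ) ^ j⌋ % (b : ℤ)).toNat

/-- The digit sequence `a₁ a₂ a₃ ⋯` of the base-`b` expansion of `ξ` (index `n` gives `a_{n+1}`). -/
def digitSeq (b : ℕ) (ξ : ℝ) (n : ℕ) : ℕ := digit b ξ (n + 1)

/-- Subword complexity of an infinite word. -/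
def wordComplexity {A : Type*} (a : ℕ → A) (n : ℕ) : ℕ :=
  Set.ncard {w : Fin n → A | ∃ j : ℕ, ∀ i : Fin n, w i = a (j + i)}

/-- Subword complexity `p(ξ, b, n)` of the base-`b` expansion of `ξ`. -/
def realComplexity (b : ℕ) (ξ : ℝ) (n : ℕ) : ℕ := wordComplexity (digitSeq b ξ) n

/-- Exponents `ρ` for which `|ξ - p/q| < q^(-ρ)` has infinitely many rational solutions. -/
def muSet (ξ : ℝ) : Set ℝ :=
  {ρ : ℝ | {r : ℚ | |ξ - (r : ℝ)| < 1 / (r.den : ℝ) ^ ρ}.Infinite}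

/-- The irrationality exponent of a real number. -/
def mu (ξ : ℝ) : EReal := sSup ((fun ρ : ℝ => (ρ : EReal)) '' muSet ξ)

/-- Fractional power `V^x` of a finite word. -/
def wordPow {A : Type*} (V : List A) (x : ℝ) : List A :=
  (List.replicate ⌊x⌋₊ V).flatten ++ V.take ⌈(x - (⌊x⌋₊ : ℝ)) * (V.length : ℝ)⌉₊

/-- The prefix of length `n` of an infinite word. -/
def prefixWord {A : Type*} (a : ℕ → A) (n : ℕ) : List A := (List.range n).map a

/-- `L` is a prefix of the infinite word `a`. -/
def IsPrefixSeq {A : Type*} (a : ℕ → A) (L : List A) : Prop := L = prefixWord a L.length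

/-- The set of exponents defining the Diophantine exponent of an infinite word. -/
def dioSet {A : Type*} (a : ℕ → A) : Set ℝ :=
  {ρ : ℝ | ∀ m : ℕ, ∃ (U V : List A) (w : ℝ), V ≠ [] ∧ 0 < w ∧
    m ≤ (U ++ wordPow V w).length ∧ IsPrefixSeq a (U ++ wordPow V w) ∧
    ρ ≤ ((U ++ wordPow V w).length : ℝ) / ((U ++ V).length : ℝ)}

/-- The Diophantine exponent of an infinite word. -/
def dio {A : Type*} (a : ℕ → A) : EReal := sSup ((fun ρ : ℝ => (ρ : EReal)) '' dioSet a)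

/-- The set of exponents defining the initial critical exponent of an infinite word. -/
def iceSet {A : Type*} (a : ℕ → A) : Set ℝ :=
  {ρ : ℝ | 0 < ρ ∧ ∀ m : ℕ, ∃ n : ℕ, m ≤ n ∧ 0 < n ∧
    IsPrefixSeq a (wordPow (prefixWord a n) ρ)}

/-- The initial critical exponent of an infinite word. -/
def ice {A : Type*} (a : ℕ → A) : EReal := sSup ((fun ρ : ℝ => (ρ : EReal)) '' iceSet a)

/-- An infinite word is eventually periodic. -/
def EventuallyPeriodic {A : Type*} (a : ℕ → A) : Prop :=
  ∃ T : ℕ, 0 < T ∧ ∃ N : ℕ, ∀ n : ℕ, N ≤ n → a (n + T) = a n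

/-- A Sturmian word: an infinite binary word of subword complexity `n + 1`. -/
def IsSturmian (s : ℕ → Fin 2) : Prop := ∀ n : ℕ, 1 ≤ n → wordComplexity s n = n + 1

/-- The slope of a binary word: the frequency of the letter `1`. -/
def HasSlope (s : ℕ → Fin 2) (α : ℝ) : Prop :=
  Tendsto (fun n : ℕ => (((prefixWord s n).count 1 : ℕ) : ℝ) / (n : ℝ)) atTop (nhds α)

/-- The iterated Gauss map orbit: complete quotients of the continued fraction of `ξ`. -/
def cfTail (ξ : ℝ) : ℕ → ℝ
  | 0 => ξ
  | n + 1 => 1 / Int.fract (cfTail ξ n)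

/-- The `n`-th partial quotient of the continued fraction expansion of `ξ`. -/
def partialQuotient (ξ : ℝ) (n : ℕ) : ℤ := ⌊cfTail ξ n⌋


namespace MuE

open Polynomial


lemma exp_one_le_three : Real.exp 1 ≤ 3 := Real.exp_one_lt_d9.le.trans (by norm_num)

lemma succ_pow_le (m : ℕ) (hm : 1 ≤ m) : ((m : ℝ) + 1) ^ m ≤ 3 * (m : ℝ) ^ m := by
  have hm' : (0 : ℝ) < m := by exact_mod_cast hm
  have h1 : ((m : ℝ) + 1) = (m : ℝ) * (1 + 1 / m) := by field_simp
  rw [h1, mul_pow]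
  have h2 : (1 + 1 / (m : ℝ)) ^ m ≤ 3 := by
    have h3 := Real.add_one_le_exp (1 / (m : ℝ))
    calc (1 + 1 / (m : ℝ)) ^ m ≤ (Real.exp (1 / m)) ^ m := by
          apply pow_le_pow_left₀ (by positivity) (by linarith)
      _ = Real.exp (m * (1 / m)) := by rw [← Real.exp_nat_mul]
      _ = Real.exp 1 := by rw [mul_one_div, div_self (ne_of_gt hm')]
      _ ≤ 3 := exp_one_le_three
  have h4 : (0:ℝ) ≤ (m:ℝ)^m := by positivity
  nlinarith [pow_nonneg (le_of_lt hm') m]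

lemma pow_self_le_factorial : ∀ m : ℕ, ((m : ℝ)) ^ m ≤ 3 ^ m * m.factorial := by
  intro m
  induction m with
  | zero => norm_num
  | succ m ih =>
    rcases Nat.eq_zero_or_pos m with rfl | hm
    · norm_num
    · have h := succ_pow_le m hm
      have hstep : ((m : ℝ) + 1) ^ (m + 1) = ((m : ℝ) + 1) ^ m * ((m : ℝ) + 1) := by ring
      push_cast
      rw [hstep]
      have h1 : (0:ℝ) < (m:ℝ) + 1 := by positivity
      calc ((m : ℝ) + 1) ^ m * ((m : ℝ) + 1) ≤ (3 * (m:ℝ)^m) * ((m:ℝ)+1) := by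
            apply mul_le_mul_of_nonneg_right h h1.le
        _ ≤ (3 * (3 ^ m * m.factorial)) * ((m:ℝ)+1) := by
            have : ((m : ℝ))^m ≤ 3^m * m.factorial := ih
            nlinarith [this, h1.le]
        _ = 3 ^ (m+1) * ((m:ℝ)+1) * m.factorial := by ring
        _ = 3 ^ (m+1) * ((m+1).factorial) := by
            rw [Nat.factorial_succ]; push_cast; ring

lemma key (C K x : ℝ) (hC : 0 < C) (hK : 2 ≤ K) (hx : 0 < x) :
    ∀ᶠ m : ℕ in atTop, C * K ^ m ≤ ((4 : ℝ) ^ m * m.factorial / 6) ^ x := by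
  have hK1 : (1 : ℝ) < K := by linarith
  have h1 : Tendsto (fun m : ℕ => ((m : ℝ)) ^ x) atTop atTop :=
    (tendsto_rpow_atTop hx).comp tendsto_natCast_atTop_atTop
  have h2 : Tendsto (fun m : ℕ => K ^ m) atTop atTop := tendsto_pow_atTop_atTop_of_one_lt hK1
  filter_upwards [h1.eventually_ge_atTop (K ^ 2), h2.eventually_ge_atTop (C * 6 ^ x),
    eventually_ge_atTop 1] with m hm1 hm2 hm3
  have hKm : (0 : ℝ) < K ^ m := by positivity
  have e1 : C * K ^ m * 6 ^ x ≤ K ^ m * K ^ m := by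
    calc C * K ^ m * 6 ^ x = (C * 6 ^ x) * K ^ m := by ring
      _ ≤ K ^ m * K ^ m := mul_le_mul_of_nonneg_right hm2 hKm.le
  have e2 : K ^ m * K ^ m = (K ^ 2) ^ m := by rw [← mul_pow]; ring_nf
  have e3 : (K ^ 2) ^ m ≤ (((m : ℝ)) ^ x) ^ m := pow_le_pow_left₀ (by positivity) hm1 m
  have e4 : (((m : ℝ)) ^ x) ^ m = (((m : ℝ)) ^ m : ℝ) ^ x := by
    rw [← Real.rpow_natCast (((m : ℝ)) ^ x) m, ← Real.rpow_mul (Nat.cast_nonneg m), mul_comm,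
      Real.rpow_mul (Nat.cast_nonneg m), Real.rpow_natCast]
  have e5 : (((m : ℝ)) ^ m : ℝ) ^ x ≤ ((4 : ℝ) ^ m * m.factorial) ^ x := by
    apply Real.rpow_le_rpow (by positivity) _ hx.le
    calc ((m : ℝ)) ^ m ≤ 3 ^ m * m.factorial := pow_self_le_factorial m
      _ ≤ 4 ^ m * m.factorial := by
          apply mul_le_mul_of_nonneg_right (pow_le_pow_left₀ (by norm_num) (by norm_num) m)
            (by positivity)
  have e6 : C * K ^ m * 6 ^ x ≤ ((4 : ℝ) ^ m * m.factorial) ^ x := by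
    calc C * K ^ m * 6 ^ x ≤ K ^ m * K ^ m := e1
      _ = (K ^ 2) ^ m := e2
      _ ≤ (((m : ℝ)) ^ x) ^ m := e3
      _ = (((m : ℝ)) ^ m : ℝ) ^ x := e4
      _ ≤ _ := e5
  rw [Real.div_rpow (by positivity) (by norm_num)]
  rw [le_div_iff₀ (by positivity)]
  linarith [e6]



noncomputable def P (n : ℕ) : ℤ[X] := (X * (1 - X)) ^ n
noncomputable def G (n : ℕ) : ℤ[X] := sumIDeriv (P n)
noncomputable def Jn (n : ℕ) : ℝ := ∫ x in (0:ℝ)..1, Real.exp (1 - x) * (x * (1 - x)) ^ n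

lemma map_P_id (n : ℕ) : (P n).map (algebraMap ℤ ℤ) = P n := by
  have : algebraMap ℤ ℤ = RingHom.id ℤ := by ext; simp
  rw [this, Polynomial.map_id]

lemma aeval_int (r : ℤ) (q : ℤ[X]) : aeval r q = q.eval r := by
  rw [aeval_def, eval₂_eq_eval_map,
    (show algebraMap ℤ ℤ = RingHom.id ℤ by ext; simp), Polynomial.map_id]

lemma dvd0 (n : ℕ) : (n.factorial : ℤ) ∣ (G n).eval 0 := by
  obtain ⟨gp, -, h⟩ := Polynomial.aeval_sumIDeriv ℤ (P n) n
  have hfac : (P n).map (algebraMap ℤ ℤ) = (X - C (0:ℤ)) ^ n * (1 - X) ^ n := by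
    rw [map_P_id, P, C_0, sub_zero, ← mul_pow]
  have h0 := h (0 : ℤ) (Dvd.intro _ hfac.symm)
  rw [aeval_int, ← G] at h0
  exact ⟨aeval (0:ℤ) gp, by simpa [nsmul_eq_mul] using h0⟩

lemma dvd1 (n : ℕ) : (n.factorial : ℤ) ∣ (G n).eval 1 := by
  obtain ⟨gp, -, h⟩ := Polynomial.aeval_sumIDeriv ℤ (P n) n
  have hfac : (P n).map (algebraMap ℤ ℤ) = (X - C (1:ℤ)) ^ n * (-X) ^ n := by
    rw [map_P_id, P, C_1, ← mul_pow]; ring_nf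
  have h0 := h (1 : ℤ) (Dvd.intro _ hfac.symm)
  rw [aeval_int, ← G] at h0
  exact ⟨aeval (1:ℤ) gp, by simpa [nsmul_eq_mul] using h0⟩

lemma natdeg (n : ℕ) : (P n).natDegree ≤ 2 * n := by
  calc (P n).natDegree ≤ n * (X * (1 - X) : ℤ[X]).natDegree := natDegree_pow_le
    _ ≤ n * 2 := by
        apply Nat.mul_le_mul_left
        calc (X * (1 - X) : ℤ[X]).natDegree ≤ (X : ℤ[X]).natDegree + (1 - X : ℤ[X]).natDegree :=
              natDegree_mul_le
          _ ≤ 1 + 1 := by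
              apply add_le_add natDegree_X_le
              calc (1 - X : ℤ[X]).natDegree ≤ max (1 : ℤ[X]).natDegree (X : ℤ[X]).natDegree :=
                    natDegree_sub_le _ _
                _ ≤ 1 := by simp [natDegree_one, natDegree_X]
          _ = 2 := by norm_num
    _ = 2 * n := by ring

lemma coeff_abs_le (n : ℕ) : ∀ i, |(P n).coeff i| ≤ (2 : ℤ) ^ n := by
  induction n with
  | zero =>
    intro i
    simp only [P, pow_zero, coeff_one]
    split_ifs <;> simp
  | succ n ih =>
    intro i
    have hP : P (n + 1) = P n * X - P n * X ^ 2 := by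
      rw [P, pow_succ, ← P]; ring
    rw [hP, coeff_sub]
    have h1 : (P n * X).coeff i = if 1 ≤ i then (P n).coeff (i - 1) else 0 := by
      rw [← pow_one (X : ℤ[X]), coeff_mul_X_pow']
    have h2 : (P n * X ^ 2).coeff i = if 2 ≤ i then (P n).coeff (i - 2) else 0 := by
      rw [coeff_mul_X_pow']
    have b1 : |(P n * X).coeff i| ≤ (2 : ℤ) ^ n := by
      rw [h1]; split_ifs
      · exact ih _
      · simp
    have b2 : |(P n * X ^ 2).coeff i| ≤ (2 : ℤ) ^ n := by
      rw [h2]; split_ifs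
      · exact ih _
      · simp
    have hstep := (abs_sub ((P n * X).coeff i) ((P n * X ^ 2).coeff i)).trans (add_le_add b1 b2)
    have h2n : (2 : ℤ) ^ n + 2 ^ n = 2 ^ (n + 1) := by ring
    linarith

lemma G0_bound (n : ℕ) : |(G n).eval 0| ≤ (((2 * n + 1) * (2 * n).factorial * 2 ^ n : ℕ) : ℤ) := by
  have hsum : G n = ∑ i ∈ Finset.range (2 * n + 1), derivative^[i] (P n) := by
    rw [G, sumIDeriv_apply_of_le (natdeg n)]
  rw [hsum, eval_finset_sum]
  calc |∑ i ∈ Finset.range (2 * n + 1), (derivative^[i] (P n)).eval 0|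
      ≤ ∑ i ∈ Finset.range (2 * n + 1), |(derivative^[i] (P n)).eval 0| :=
        Finset.abs_sum_le_sum_abs _ _
    _ ≤ ∑ _i ∈ Finset.range (2 * n + 1), (((2 * n).factorial * 2 ^ n : ℕ) : ℤ) := by
        apply Finset.sum_le_sum
        intro i hi
        have hi' : i ≤ 2 * n := Nat.lt_succ_iff.mp (Finset.mem_range.mp hi)
        have he : (derivative^[i] (P n)).eval 0 = (i.factorial : ℤ) * (P n).coeff i := by
          rw [← coeff_zero_eq_eval_zero, coeff_iterate_derivative, zero_add,
            Nat.descFactorial_self, nsmul_eq_mul]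
        rw [he, abs_mul]
        have habs : |(i.factorial : ℤ)| = (i.factorial : ℤ) := abs_of_nonneg (by positivity)
        rw [habs]
        push_cast
        apply mul_le_mul _ (coeff_abs_le n i) (abs_nonneg _) (by positivity)
        exact_mod_cast Nat.factorial_le hi'
    _ = (((2 * n + 1) * (2 * n).factorial * 2 ^ n : ℕ) : ℤ) := by
        rw [Finset.sum_const, Finset.card_range]
        push_cast
        ring

lemma Jn_eq (n : ℕ) :
    Jn n = Real.exp 1 * (((G n).eval 0 : ℤ) : ℝ) - (((G n).eval 1 : ℤ) : ℝ) := by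
  set Q : ℝ[X] := (G n).map (Int.castRingHom ℝ) with hQdef
  have hQ : Q = sumIDeriv ((P n).map (Int.castRingHom ℝ)) := by
    rw [hQdef, G, sumIDeriv_map]
  have hQP : Q = (P n).map (Int.castRingHom ℝ) + derivative Q := by
    rw [hQ, ← sumIDeriv_derivative]
    rw [sumIDeriv_derivative]; exact sumIDeriv_eq_self_add _
  have hPeval : ∀ x : ℝ, ((P n).map (Int.castRingHom ℝ)).eval x = (x * (1 - x)) ^ n := by
    intro x
    simp [P, Polynomial.map_pow, Polynomial.map_mul, Polynomial.map_sub]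
  have hder : ∀ x ∈ Set.uIcc (0:ℝ) 1,
      HasDerivAt (fun y => -Real.exp (1 - y) * Q.eval y)
        (Real.exp (1 - x) * (x * (1 - x)) ^ n) x := by
    intro x _
    have hlin : HasDerivAt (fun y : ℝ => 1 - y) (-1) x := by
      exact (hasDerivAt_id' x).const_sub 1
    have hexp : HasDerivAt (fun y : ℝ => Real.exp (1 - y)) (-Real.exp (1 - x)) x := by
      have := hlin.exp
      rwa [mul_neg_one] at this
    have hexp' : HasDerivAt (fun y : ℝ => -Real.exp (1 - y)) (Real.exp (1 - x)) x := by
      have := hexp.neg; rwa [neg_neg] at this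
    have hpoly : HasDerivAt (fun y : ℝ => Q.eval y) (Q.derivative.eval x) x :=
      Q.hasDerivAt x
    have h := hexp'.mul hpoly
    refine h.congr_deriv ?_
    have hx : Q.eval x - Q.derivative.eval x = (x * (1 - x)) ^ n := by
      have h2 := congrArg (fun p => Polynomial.eval x p) hQP
      simp only [eval_add] at h2
      rw [hPeval x] at h2
      linarith
    rw [← hx]; ring
  have hcont : Continuous fun x : ℝ => Real.exp (1 - x) * (x * (1 - x)) ^ n := by
    fun_prop
  have hFTC := intervalIntegral.integral_eq_sub_of_hasDerivAt hder
    (hcont.intervalIntegrable 0 1)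
  have hQ1 : Q.eval 1 = (((G n).eval 1 : ℤ) : ℝ) := by
    rw [hQdef]
    have := Polynomial.eval_intCast_map (Int.castRingHom ℝ) (G n) 1
    simpa using this.symm
  have hQ0 : Q.eval 0 = (((G n).eval 0 : ℤ) : ℝ) := by
    rw [hQdef]
    have := Polynomial.eval_intCast_map (Int.castRingHom ℝ) (G n) 0
    simpa using this.symm
  rw [Jn, hFTC]
  show -Real.exp (1 - 1) * Q.eval 1 - -Real.exp (1 - 0) * Q.eval 0 = _
  rw [hQ1, hQ0]
  norm_num [Real.exp_zero]
  ring



lemma hcont (n : ℕ) : Continuous fun x : ℝ => Real.exp (1 - x) * (x * (1 - x)) ^ n := by fun_prop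

lemma Jn_ub (n : ℕ) : Jn n ≤ 3 / 4 ^ n := by
  have h : Jn n ≤ ∫ _x in (0:ℝ)..1, 3 * (1/4 : ℝ) ^ n := by
    apply intervalIntegral.integral_mono_on (by norm_num)
      ((hcont n).intervalIntegrable 0 1) intervalIntegrable_const
    intro x hx
    obtain ⟨hx0, hx1⟩ := hx
    have h01 : 0 ≤ x * (1 - x) := by nlinarith
    have h4 : x * (1 - x) ≤ 1/4 := by nlinarith [sq_nonneg (x - 1/2)]
    have hexp : Real.exp (1 - x) ≤ 3 :=
      (Real.exp_le_exp.mpr (by linarith : 1 - x ≤ 1)).trans exp_one_le_three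
    have hpow : (x * (1 - x)) ^ n ≤ (1/4 : ℝ) ^ n := pow_le_pow_left₀ h01 h4 n
    have := Real.exp_pos (1 - x)
    calc Real.exp (1 - x) * (x * (1 - x)) ^ n ≤ 3 * (x * (1-x)) ^ n := by
          apply mul_le_mul_of_nonneg_right hexp (by positivity)
      _ ≤ 3 * (1/4 : ℝ) ^ n := by linarith
  calc Jn n ≤ ∫ _x in (0:ℝ)..1, 3 * (1/4 : ℝ) ^ n := h
    _ = 3 * (1/4 : ℝ) ^ n := by simp
    _ = 3 / 4 ^ n := by rw [div_pow, one_pow]; ring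

lemma piece_nonneg (n : ℕ) {a b : ℝ} (ha : 0 ≤ a) (hab : a ≤ b) (hb : b ≤ 1) :
    0 ≤ ∫ x in a..b, Real.exp (1 - x) * (x * (1 - x)) ^ n := by
  apply intervalIntegral.integral_nonneg hab
  intro x hx
  obtain ⟨hx0, hx1⟩ := hx
  have : 0 ≤ x * (1 - x) := by nlinarith
  positivity

lemma Jn_lb (n : ℕ) : (1/8 : ℝ) ^ n / 4 ≤ Jn n := by
  have i1 : IntervalIntegrable (fun x : ℝ => Real.exp (1 - x) * (x * (1 - x)) ^ n)
      MeasureTheory.volume 0 (1/4) := (hcont n).intervalIntegrable _ _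
  have i2 : IntervalIntegrable (fun x : ℝ => Real.exp (1 - x) * (x * (1 - x)) ^ n)
      MeasureTheory.volume (1/4) (1/2) := (hcont n).intervalIntegrable _ _
  have i3 : IntervalIntegrable (fun x : ℝ => Real.exp (1 - x) * (x * (1 - x)) ^ n)
      MeasureTheory.volume (1/2) 1 := (hcont n).intervalIntegrable _ _
  have i23 : IntervalIntegrable (fun x : ℝ => Real.exp (1 - x) * (x * (1 - x)) ^ n)
      MeasureTheory.volume (1/4) 1 := (hcont n).intervalIntegrable _ _
  have hsplit1 : Jn n = (∫ x in (0:ℝ)..(1/4), Real.exp (1 - x) * (x * (1 - x)) ^ n)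
      + ∫ x in (1/4:ℝ)..1, Real.exp (1 - x) * (x * (1 - x)) ^ n := by
    rw [Jn, ← intervalIntegral.integral_add_adjacent_intervals i1 i23]
  have hsplit2 : (∫ x in (1/4:ℝ)..1, Real.exp (1 - x) * (x * (1 - x)) ^ n)
      = (∫ x in (1/4:ℝ)..(1/2), Real.exp (1 - x) * (x * (1 - x)) ^ n)
      + ∫ x in (1/2:ℝ)..1, Real.exp (1 - x) * (x * (1 - x)) ^ n := by
    rw [← intervalIntegral.integral_add_adjacent_intervals i2 i3]
  have hmid : (1/8 : ℝ) ^ n / 4 ≤ ∫ x in (1/4:ℝ)..(1/2), Real.exp (1 - x) * (x * (1 - x)) ^ n := by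
    have h : (∫ _x in (1/4:ℝ)..(1/2), (1/8 : ℝ) ^ n)
        ≤ ∫ x in (1/4:ℝ)..(1/2), Real.exp (1 - x) * (x * (1 - x)) ^ n := by
      apply intervalIntegral.integral_mono_on (by norm_num) intervalIntegrable_const i2
      intro x hx
      obtain ⟨hx0, hx1⟩ := hx
      have h8 : (1/8 : ℝ) ≤ x * (1 - x) := by nlinarith
      have hexp : (1:ℝ) ≤ Real.exp (1 - x) := Real.one_le_exp (by linarith)
      have hpow : (1/8 : ℝ) ^ n ≤ (x * (1 - x)) ^ n := pow_le_pow_left₀ (by norm_num) h8 n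
      calc (1/8 : ℝ) ^ n = 1 * (1/8 : ℝ) ^ n := (one_mul _).symm
        _ ≤ Real.exp (1 - x) * (x * (1 - x)) ^ n := by
            apply mul_le_mul hexp hpow (by positivity) (by positivity)
    calc (1/8 : ℝ) ^ n / 4 = ∫ _x in (1/4:ℝ)..(1/2), (1/8 : ℝ) ^ n := by simp; ring
      _ ≤ _ := h
  have p1 := piece_nonneg n (le_refl 0) (by norm_num : (0:ℝ) ≤ 1/4) (by norm_num)
  have p3 := piece_nonneg n (by norm_num : (0:ℝ) ≤ 1/2) (by norm_num) (le_refl 1)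
  rw [hsplit1, hsplit2]
  linarith

lemma Jn_pos (n : ℕ) : 0 < Jn n := lt_of_lt_of_le (by positivity) (Jn_lb n)


noncomputable def bb (n : ℕ) : ℤ := (G n).eval 0 / n.factorial
noncomputable def aa (n : ℕ) : ℤ := (G n).eval 1 / n.factorial
noncomputable def δ (n : ℕ) : ℝ := Jn n / n.factorial

lemma b_eval (n : ℕ) : (n.factorial : ℤ) * bb n = (G n).eval 0 := Int.mul_ediv_cancel' (dvd0 n)
lemma a_eval (n : ℕ) : (n.factorial : ℤ) * aa n = (G n).eval 1 := Int.mul_ediv_cancel' (dvd1 n)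

lemma fact_pos (n : ℕ) : (0:ℝ) < n.factorial := by positivity

lemma δ_pos (n : ℕ) : 0 < δ n := div_pos (Jn_pos n) (fact_pos n)

lemma δ_eq (n : ℕ) : δ n = (bb n : ℝ) * Real.exp 1 - (aa n : ℝ) := by
  have h : (n.factorial : ℝ) * ((bb n : ℝ) * Real.exp 1 - (aa n : ℝ)) = Jn n := by
    rw [Jn_eq]
    have h0 : ((n.factorial : ℤ) : ℝ) * (bb n : ℝ) = (((G n).eval 0 : ℤ) : ℝ) := by
      rw [← Int.cast_mul, b_eval]
    have h1 : ((n.factorial : ℤ) : ℝ) * (aa n : ℝ) = (((G n).eval 1 : ℤ) : ℝ) := by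
      rw [← Int.cast_mul, a_eval]
    push_cast at h0 h1 ⊢
    calc (n.factorial:ℝ) * ((bb n : ℝ) * Real.exp 1 - (aa n : ℝ))
        = ((n.factorial:ℝ) * (bb n : ℝ)) * Real.exp 1 - ((n.factorial:ℝ) * (aa n : ℝ)) := by ring
      _ = ((eval 0 (G n) : ℤ) : ℝ) * Real.exp 1 - ((eval 1 (G n) : ℤ) : ℝ) := by rw [h0, h1]
      _ = Real.exp 1 * ((eval 0 (G n) : ℤ) : ℝ) - ((eval 1 (G n) : ℤ) : ℝ) := by ring
  rw [δ, ← h]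
  field_simp

lemma δ_ub (n : ℕ) : δ n ≤ 3 / (4 ^ n * n.factorial) := by
  have h : Jn n / n.factorial ≤ (3 / 4 ^ n) / n.factorial :=
    div_le_div_of_nonneg_right (Jn_ub n) (fact_pos n).le
  rw [δ]
  calc Jn n / n.factorial ≤ (3 / 4 ^ n) / n.factorial := h
    _ = 3 / (4 ^ n * n.factorial) := by rw [div_div]

lemma δ_ub' (n : ℕ) : δ n ≤ 3 / 4 ^ n := by
  have h := δ_ub n
  have h2 : (3:ℝ) / (4 ^ n * n.factorial) ≤ 3 / 4 ^ n := by
    apply div_le_div_of_nonneg_left (by norm_num) (by positivity)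
    calc (4:ℝ)^n = 4^n * 1 := by ring
      _ ≤ 4^n * n.factorial := by
          apply mul_le_mul_of_nonneg_left _ (by positivity)
          exact_mod_cast Nat.one_le_iff_ne_zero.mpr (Nat.factorial_ne_zero n)
  linarith

lemma δ_lb (n : ℕ) : (1/8 : ℝ) ^ n / (4 * n.factorial) ≤ δ n := by
  have h : ((1/8 : ℝ) ^ n / 4) / n.factorial ≤ Jn n / n.factorial :=
    div_le_div_of_nonneg_right (Jn_lb n) (fact_pos n).le
  rw [δ]
  calc (1/8 : ℝ) ^ n / (4 * n.factorial) = ((1/8 : ℝ) ^ n / 4) / n.factorial := by rw [div_div]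
    _ ≤ Jn n / n.factorial := h

lemma two_n_fact_le (n : ℕ) : (2*n).factorial ≤ 4 ^ n * n.factorial * n.factorial := by
  have h1 : (2*n).choose n * (n.factorial * (2*n - n).factorial) = (2*n).factorial := by
    have := Nat.choose_mul_factorial_mul_factorial (Nat.le_mul_of_pos_left n (by norm_num) : n ≤ 2*n)
    rw [← this]; ring
  have hsub : 2*n - n = n := by omega
  rw [hsub] at h1
  have h2 : (2*n).choose n ≤ 4 ^ n := by
    calc (2*n).choose n ≤ ∑ i ∈ Finset.range (2*n+1), (2*n).choose i :=
          Finset.single_le_sum (fun i _ => Nat.zero_le _) (Finset.mem_range.mpr (by omega))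
      _ = 2 ^ (2*n) := Nat.sum_range_choose (2*n)
      _ = 4 ^ n := by rw [pow_mul]; norm_num
  calc (2*n).factorial = (2*n).choose n * (n.factorial * n.factorial) := h1.symm
    _ ≤ 4 ^ n * (n.factorial * n.factorial) := Nat.mul_le_mul_right _ h2
    _ = 4 ^ n * n.factorial * n.factorial := by ring

lemma b_abs_le (n : ℕ) : |(bb n : ℝ)| ≤ (2*(n:ℝ)+1) * 8 ^ n * n.factorial := by
  have h1 : (n.factorial : ℤ) * |bb n| ≤ (((2 * n + 1) * (2 * n).factorial * 2 ^ n : ℕ) : ℤ) := by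
    calc (n.factorial : ℤ) * |bb n| = |(n.factorial : ℤ) * bb n| := by
          rw [abs_mul, abs_of_nonneg (by positivity : (0:ℤ) ≤ (n.factorial:ℤ))]
      _ = |(G n).eval 0| := by rw [b_eval]
      _ ≤ _ := G0_bound n
  have h2 : ((2 * n + 1) * (2 * n).factorial * 2 ^ n : ℕ) ≤
      (2*n+1) * (4 ^ n * n.factorial * n.factorial) * 2 ^ n :=
    Nat.mul_le_mul_right _ (Nat.mul_le_mul_left _ (two_n_fact_le n))
  have h3 : (n.factorial : ℤ) * |bb n| ≤
      (((2*n+1) * (4 ^ n * n.factorial * n.factorial) * 2 ^ n : ℕ) : ℤ) :=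
    h1.trans (by exact_mod_cast h2)
  have h4 : ((n.factorial : ℝ)) * |(bb n : ℝ)| ≤
      ((((2*n+1) * (4 ^ n * n.factorial * n.factorial) * 2 ^ n : ℕ) : ℕ) : ℝ) := by
    exact_mod_cast h3
  have h8 : ((4:ℝ) ^ n * 2 ^ n) = 8 ^ n := by rw [← mul_pow]; norm_num
  have h5 : ((((2*n+1) * (4 ^ n * n.factorial * n.factorial) * 2 ^ n : ℕ)) : ℝ)
      = (n.factorial : ℝ) * ((2*(n:ℝ)+1) * 8 ^ n * n.factorial) := by
    push_cast
    rw [← h8]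
    ring
  rw [h5] at h4
  exact le_of_mul_le_mul_left h4 (fact_pos n)



noncomputable def Bq (n : ℕ) : ℝ := (2*(n:ℝ)+1) * 8 ^ n * n.factorial
noncomputable def Lq (n : ℕ) : ℝ := (1/8 : ℝ) ^ n / (4 * n.factorial)

lemma Bq_pos (n : ℕ) : 0 < Bq n := by rw [Bq]; positivity
lemma Lq_pos (n : ℕ) : 0 < Lq n := by rw [Lq]; positivity

lemma irrational_e : Irrational (Real.exp 1) := by
  rintro ⟨r, hr⟩
  have hd : (0:ℝ) < r.den := by exact_mod_cast r.pos
  obtain ⟨n, hn⟩ := pow_unbounded_of_one_lt (3 * (r.den : ℝ)) (by norm_num : (1:ℝ) < 4)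
  have hsmall : δ n < 1 / r.den := by
    have h1 : δ n ≤ 3 / 4 ^ n := δ_ub' n
    have h2 : (3:ℝ) / 4 ^ n < 1 / r.den := by
      rw [div_lt_div_iff₀ (by positivity) hd]
      linarith
    linarith
  have hnum : ((r.den : ℤ) : ℝ) * Real.exp 1 = (r.num : ℝ) := by
    rw [← hr, Rat.cast_def]
    push_cast
    field_simp
  set D : ℤ := bb n * r.num - aa n * r.den with hD
  have hDr : (D : ℝ) = δ n * r.den := by
    rw [δ_eq n, hD]
    push_cast
    have h5 : (r.den : ℝ) * Real.exp 1 = (r.num : ℝ) := by exact_mod_cast hnum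
    linear_combination (-(bb n : ℝ)) * h5
  have hDpos : (0:ℝ) < D := by
    rw [hDr]; exact mul_pos (δ_pos n) hd
  have hD1 : (1:ℝ) ≤ D := by exact_mod_cast (by exact_mod_cast hDpos : (0:ℤ) < D)
  rw [hDr] at hD1
  have : (1:ℝ) ≤ δ n * r.den := hD1
  have h3 : δ n * r.den < 1 := by
    calc δ n * r.den < (1 / r.den) * r.den := by
          apply mul_lt_mul_of_pos_right hsmall hd
      _ = 1 := by field_simp
  linarith

lemma EA {x : ℝ} (hx : 0 < x) : ∀ᶠ m : ℕ in atTop,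
    2 * Bq (m+1) ≤ ((4:ℝ) ^ m * m.factorial / 6) ^ (1+x) := by
  filter_upwards [key 384 8 x (by norm_num) (by norm_num) hx] with m hkey
  have hg : (0:ℝ) < 4 ^ m * m.factorial / 6 := by positivity
  have hmp : ((m:ℝ)+1) ≤ 2 ^ m := by
    exact_mod_cast Nat.succ_le_of_lt (Nat.lt_two_pow_self (n := m))
  have h23 : (2*((m:ℝ)+1)+1) ≤ 4 * 2 ^ m := by linarith
  have hfact : (((m+1).factorial : ℕ) : ℝ) = ((m:ℝ)+1) * m.factorial := by
    rw [Nat.factorial_succ]; push_cast; ring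
  have e1 : 2 * Bq (m+1) ≤ 64 * 32 ^ m * (m.factorial : ℝ) := by
    rw [Bq, hfact]
    push_cast
    calc 2 * ((2*((m:ℝ)+1)+1) * 8 ^ (m+1) * (((m:ℝ)+1) * m.factorial))
        = ((2*((m:ℝ)+1)+1) * ((m:ℝ)+1)) * (16 * 8 ^ m * m.factorial) := by
          rw [pow_succ]; ring
      _ ≤ ((4 * 2 ^ m) * (2 ^ m)) * (16 * 8 ^ m * m.factorial) := by
          apply mul_le_mul_of_nonneg_right _ (by positivity)
          apply mul_le_mul h23 hmp (by positivity) (by positivity)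
      _ = 64 * 32 ^ m * m.factorial := by
          rw [show (32:ℝ) ^ m = 2 ^ m * 2 ^ m * 8 ^ m by
            rw [← mul_pow, ← mul_pow]; norm_num]
          ring
  have e2 : (64:ℝ) * 32 ^ m * m.factorial = (4 ^ m * m.factorial / 6) * (384 * 8 ^ m) := by
    rw [show (32:ℝ) ^ m = 4 ^ m * 8 ^ m by rw [← mul_pow]; norm_num]
    ring
  have e3 : ((4:ℝ) ^ m * m.factorial / 6) * (384 * 8 ^ m)
      ≤ (4 ^ m * m.factorial / 6) * ((4 ^ m * m.factorial / 6) ^ x) :=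
    mul_le_mul_of_nonneg_left hkey hg.le
  have e4 : ((4:ℝ) ^ m * m.factorial / 6) * ((4 ^ m * m.factorial / 6) ^ x)
      = (4 ^ m * m.factorial / 6) ^ (1+x) := by
    rw [Real.rpow_add hg, Real.rpow_one]
  linarith

lemma EB {x : ℝ} (hx : 0 < x) : ∀ᶠ m : ℕ in atTop,
    Bq (m+1) ≤ ((4:ℝ) ^ m * m.factorial / 6) ^ (2+x) * Lq (m+1) := by
  filter_upwards [key 36864 32 x (by norm_num) (by norm_num) hx] with m hkey
  have hg : (0:ℝ) < 4 ^ m * m.factorial / 6 := by positivity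
  have hmp : ((m:ℝ)+1) ≤ 2 ^ m := by
    exact_mod_cast Nat.succ_le_of_lt (Nat.lt_two_pow_self (n := m))
  have h23 : (2*((m:ℝ)+1)+1) ≤ 4 * 2 ^ m := by linarith
  have hfact : (((m+1).factorial : ℕ) : ℝ) = ((m:ℝ)+1) * m.factorial := by
    rw [Nat.factorial_succ]; push_cast; ring
  have e1 : Bq (m+1) ≤ 32 * 32 ^ m * (m.factorial : ℝ) := by
    rw [Bq, hfact]
    push_cast
    calc (2*((m:ℝ)+1)+1) * 8 ^ (m+1) * (((m:ℝ)+1) * m.factorial)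
        = ((2*((m:ℝ)+1)+1) * ((m:ℝ)+1)) * (8 * 8 ^ m * m.factorial) := by
          rw [pow_succ]; ring
      _ ≤ ((4 * 2 ^ m) * (2 ^ m)) * (8 * 8 ^ m * m.factorial) := by
          apply mul_le_mul_of_nonneg_right _ (by positivity)
          apply mul_le_mul h23 hmp (by positivity) (by positivity)
      _ = 32 * 32 ^ m * m.factorial := by
          rw [show (32:ℝ) ^ m = 2 ^ m * 2 ^ m * 8 ^ m by
            rw [← mul_pow, ← mul_pow]; norm_num]
          ring
  have eL : 1 / (32 * 16 ^ m * (m.factorial:ℝ)) ≤ Lq (m+1) := by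
    have h16 : (16:ℝ) ^ m = 2 ^ m * 8 ^ m := by rw [← mul_pow]; norm_num
    have hstep : ((1:ℝ)/8) ^ (m+1) / (4 * (2 ^ m * (m.factorial:ℝ)))
        = 1 / (32 * 16 ^ m * m.factorial) := by
      rw [div_pow, one_pow, pow_succ, h16]
      have hf : (0:ℝ) < (m.factorial : ℝ) := by positivity
      field_simp
      ring
    rw [Lq, hfact, ← hstep]
    apply div_le_div_of_nonneg_left (by positivity) (by positivity)
    have : ((m:ℝ)+1) * m.factorial ≤ 2 ^ m * m.factorial :=
      mul_le_mul_of_nonneg_right hmp (by positivity)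
    linarith
  have e2 : ((4:ℝ) ^ m * m.factorial / 6) ^ ((2:ℝ)+x)
      = ((4:ℝ) ^ m * m.factorial / 6) ^ (2:ℕ) * ((4:ℝ) ^ m * m.factorial / 6) ^ x := by
    rw [Real.rpow_add hg, ← Real.rpow_natCast _ 2]
    norm_num
  have e3 : ((4:ℝ) ^ m * m.factorial / 6) ^ (2:ℕ) * (36864 * 32 ^ m)
      ≤ ((4:ℝ) ^ m * m.factorial / 6) ^ (2:ℕ) * ((4:ℝ) ^ m * m.factorial / 6) ^ x :=
    mul_le_mul_of_nonneg_left hkey (by positivity)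
  have e4 : (((4:ℝ) ^ m * m.factorial / 6) ^ (2:ℕ) * (36864 * 32 ^ m))
      * (1 / (32 * 16 ^ m * (m.factorial:ℝ))) = 32 * 32 ^ m * (m.factorial:ℝ) := by
    have h16 : (16:ℝ) ^ m = 4 ^ m * 4 ^ m := by rw [← mul_pow]; norm_num
    have hf : (0:ℝ) < (m.factorial : ℝ) := by positivity
    rw [h16]
    field_simp
    ring
  calc Bq (m+1) ≤ 32 * 32 ^ m * (m.factorial:ℝ) := e1
    _ = (((4:ℝ) ^ m * m.factorial / 6) ^ (2:ℕ) * (36864 * 32 ^ m))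
        * (1 / (32 * 16 ^ m * (m.factorial:ℝ))) := e4.symm
    _ ≤ (((4:ℝ) ^ m * m.factorial / 6) ^ (2:ℕ) * ((4:ℝ) ^ m * m.factorial / 6) ^ x)
        * Lq (m+1) := by
        apply mul_le_mul e3 eL (by positivity) (by positivity)
    _ = ((4:ℝ) ^ m * m.factorial / 6) ^ ((2:ℝ)+x) * Lq (m+1) := by rw [e2]

noncomputable def LB (n : ℕ) : ℝ := (1/8 : ℝ) ^ n / (4 * n.factorial)

lemma LB_pos (n : ℕ) : 0 < LB n := by rw [LB]; positivity

lemma LB_anti {k N : ℕ} (h : k ≤ N) : LB N ≤ LB k := by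
  rw [LB, LB]
  apply div_le_div₀ (by positivity) (pow_le_pow_of_le_one (by norm_num) (by norm_num) h)
    (by positivity)
  have : (k.factorial : ℝ) ≤ N.factorial := by exact_mod_cast Nat.factorial_le h
  linarith

lemma finite_of_gt_two {ρ : ℝ} (hρ : 2 < ρ) :
    {r : ℚ | |Real.exp 1 - (r : ℝ)| < 1 / (r.den : ℝ) ^ ρ}.Finite := by
  classical
  set x := ρ - 2 with hxdef
  have hx : 0 < x := by simp [hxdef]; linarith
  have hρx : ρ = 2 + x := by rw [hxdef]; ring
  obtain ⟨N, hN⟩ := eventually_atTop.mp ((EA hx).and (EB hx))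
  obtain ⟨Q₀, hQ₀⟩ := exists_nat_gt (max (1 / LB N) 1)
  have hQ₀1 : (1:ℝ) < Q₀ := lt_of_le_of_lt (le_max_right _ _) hQ₀
  have hQ₀L : 1 / LB N < Q₀ := lt_of_le_of_lt (le_max_left _ _) hQ₀
  -- main claim: no solutions with large denominator
  have claim : ∀ r : ℚ, |Real.exp 1 - (r : ℝ)| < 1 / (r.den : ℝ) ^ ρ → r.den < Q₀ := by
    intro r hr
    by_contra hden
    push_neg at hden
    set q : ℝ := (r.den : ℝ) with hqdef
    have hq1 : (1:ℝ) ≤ q := by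
      have h := r.pos
      rw [hqdef]
      exact_mod_cast h
    have hq0 : (0:ℝ) < q := by linarith
    have hqQ : (Q₀ : ℝ) ≤ q := by
      rw [hqdef]
      exact_mod_cast hden
    -- existence of n with δ n < 1/(2q)
    have hex : ∃ n : ℕ, δ n < 1 / (2*q) := by
      obtain ⟨n, hn⟩ := pow_unbounded_of_one_lt (6*q) (by norm_num : (1:ℝ) < 4)
      refine ⟨n, lt_of_le_of_lt (δ_ub' n) ?_⟩
      rw [div_lt_div_iff₀ (by positivity) (by positivity)]
      linarith
    set n := Nat.find hex with hndef
    have hn : δ n < 1 / (2*q) := Nat.find_spec hex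
    have hmin : ∀ k, k < n → 1 / (2*q) ≤ δ k := by
      intro k hk
      have := Nat.find_min hex hk
      linarith [not_lt.mp this]
    -- n ≥ N + 1
    have hnN : N + 1 ≤ n := by
      by_contra hcon
      push_neg at hcon
      have hle : n ≤ N := by omega
      have h1 : LB N ≤ δ n := (LB_anti hle).trans (δ_lb n)
      have h2 : 1 / q ≤ 1 / (Q₀ : ℝ) := by
        apply div_le_div_of_nonneg_left (by norm_num) (by linarith) hqQ
      have h3 : 1 / (Q₀ : ℝ) < LB N := by
        rw [div_lt_iff₀ (by linarith)]
        rw [div_lt_iff₀ (LB_pos N)] at hQ₀L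
        linarith [mul_comm (LB N) (Q₀:ℝ)]
      have h4 : δ n < 1 / q := by
        have : 1 / (2*q) ≤ 1 / q := by
          apply div_le_div_of_nonneg_left (by norm_num) hq0 (by linarith)
        linarith
      linarith
    set m := n - 1 with hmdef
    have hnm : n = m + 1 := by omega
    have hmN : N ≤ m := by omega
    obtain ⟨hEAm, hEBm⟩ := hN m hmN
    set g : ℝ := (4:ℝ) ^ m * m.factorial / 6 with hgdef
    have hgpos : (0:ℝ) < g := by rw [hgdef]; positivity
    have hlow : 1 / (2*q) ≤ δ m := hmin m (by omega)
    have hgq : g ≤ q := by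
      have h1 : 1 / (2*q) ≤ 3 / (4 ^ m * m.factorial) := hlow.trans (δ_ub m)
      rw [div_le_div_iff₀ (by positivity) (by positivity)] at h1
      rw [hgdef]
      rw [div_le_iff₀ (by norm_num : (0:ℝ) < 6)] at *
      linarith
    -- the key linear identity
    have hnum : (r : ℝ) = (r.num : ℝ) / q := by rw [hqdef, Rat.cast_def]
    set D : ℤ := (r.den : ℤ) * aa n - r.num * bb n with hDdef
    have hDr : (D : ℝ) = (bb n : ℝ) * q * (Real.exp 1 - (r:ℝ)) - q * δ n := by
      rw [δ_eq n, hnum, hDdef]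
      push_cast
      field_simp
      ring
    have hqδ : q * δ n < 1/2 := by
      have := mul_lt_mul_of_pos_left hn hq0
      rw [mul_one_div] at this
      calc q * δ n < q / (2*q) := this
        _ = 1/2 := by field_simp
    have hBq : |(bb n : ℝ)| ≤ Bq n := by rw [Bq]; exact b_abs_le n
    have hrq : |Real.exp 1 - (r:ℝ)| < 1 / q ^ ρ := hr
    have hqρ : (0:ℝ) < q ^ ρ := Real.rpow_pos_of_pos hq0 ρ
    by_cases hD : D = 0
    · -- r coincides with the approximation
      have h1 : (bb n : ℝ) * q * (Real.exp 1 - (r:ℝ)) = q * δ n := by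
        rw [hD] at hDr
        simp at hDr
        linarith
      have habs : |(bb n : ℝ)| * q * |Real.exp 1 - (r:ℝ)| = q * δ n := by
        have h2 := congrArg abs h1
        rw [abs_mul, abs_mul, abs_of_pos hq0,
          abs_of_pos (mul_pos hq0 (δ_pos n))] at h2
        exact h2
      -- q δ n < q * Lq n leads to contradiction with δ_lb
      have hstep : q * δ n < Bq n * (q * (1 / q ^ ρ)) := by
        rw [← habs]
        calc |(bb n : ℝ)| * q * |Real.exp 1 - (r:ℝ)|
            ≤ Bq n * q * |Real.exp 1 - (r:ℝ)| := by
              apply mul_le_mul_of_nonneg_right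
                (mul_le_mul_of_nonneg_right hBq hq0.le) (abs_nonneg _)
          _ < Bq n * q * (1 / q ^ ρ) := by
              apply mul_lt_mul_of_pos_left hrq (mul_pos (Bq_pos n) hq0)
          _ = Bq n * (q * (1 / q ^ ρ)) := by ring
      have hBqLq : Bq n ≤ g ^ ((2:ℝ)+x) * Lq n := by rw [hnm]; exact hEBm
      have hgq2 : g ^ ((2:ℝ)+x) ≤ q ^ ((2:ℝ)+x) :=
        Real.rpow_le_rpow hgpos.le hgq (by linarith)
      have hq2ρ : q ^ ((2:ℝ)+x) = q ^ ρ := by rw [hρx]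
      have hfinal : q * δ n < q * Lq n := by
        calc q * δ n < Bq n * (q * (1 / q ^ ρ)) := hstep
          _ ≤ (g ^ ((2:ℝ)+x) * Lq n) * (q * (1 / q ^ ρ)) := by
              apply mul_le_mul_of_nonneg_right hBqLq (by positivity)
          _ ≤ (q ^ ρ * Lq n) * (q * (1 / q ^ ρ)) := by
              apply mul_le_mul_of_nonneg_right _ (by positivity)
              apply mul_le_mul_of_nonneg_right _ (Lq_pos n).le
              rw [← hq2ρ]; exact hgq2
          _ = q * Lq n := by field_simp
      have hcon : δ n < Lq n := lt_of_mul_lt_mul_left hfinal hq0.le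
      have hLq : Lq n ≤ δ n := by rw [Lq]; exact δ_lb n
      linarith
    · have hD1 : (1:ℝ) ≤ |(D:ℝ)| := by
        have : (1:ℤ) ≤ |D| := Int.one_le_abs hD
        exact_mod_cast this
      have h2 : |(D:ℝ)| ≤ |(bb n : ℝ)| * (q * |Real.exp 1 - (r:ℝ)|) + q * δ n := by
        rw [hDr]
        calc |(bb n : ℝ) * q * (Real.exp 1 - (r:ℝ)) - q * δ n|
            ≤ |(bb n : ℝ) * q * (Real.exp 1 - (r:ℝ))| + |q * δ n| := abs_sub _ _
          _ = |(bb n : ℝ)| * (q * |Real.exp 1 - (r:ℝ)|) + q * δ n := by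
              rw [abs_mul, abs_mul, abs_of_pos hq0,
                abs_of_pos (mul_pos hq0 (δ_pos n))]
              ring
      have h3 : 1/2 ≤ Bq n * (q * |Real.exp 1 - (r:ℝ)|) := by
        have hb := mul_le_mul_of_nonneg_right hBq
          (by positivity : (0:ℝ) ≤ q * |Real.exp 1 - (r:ℝ)|)
        linarith
      have h4 : 1/2 < Bq n * (q * (1 / q ^ ρ)) := by
        apply lt_of_le_of_lt h3
        apply mul_lt_mul_of_pos_left _ (Bq_pos n)
        exact mul_lt_mul_of_pos_left hrq hq0
      have h5 : q ^ ρ < 2 * Bq n * q := by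
        have h := mul_lt_mul_of_pos_right h4 hqρ
        have he : Bq n * (q * (1 / q ^ ρ)) * q ^ ρ = Bq n * q := by
          field_simp
        rw [he] at h
        linarith
      have h6 : 2 * Bq n ≤ g ^ ((1:ℝ)+x) := by rw [hnm]; exact hEAm
      have h7 : g ^ ((1:ℝ)+x) ≤ q ^ ((1:ℝ)+x) :=
        Real.rpow_le_rpow hgpos.le hgq (by linarith)
      have h8 : q ^ ((1:ℝ)+x) * q = q ^ ρ := by
        have he : ρ = (1+x)+1 := by rw [hρx]; ring
        rw [he, Real.rpow_add hq0 (1+x) 1, Real.rpow_one]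
      have : q ^ ρ < q ^ ρ := by
        calc q ^ ρ < 2 * Bq n * q := h5
          _ ≤ g ^ ((1:ℝ)+x) * q := mul_le_mul_of_nonneg_right h6 hq0.le
          _ ≤ q ^ ((1:ℝ)+x) * q := mul_le_mul_of_nonneg_right h7 hq0.le
          _ = q ^ ρ := h8
      exact lt_irrefl _ this
  -- small denominators form a finite set
  have hfin : {r : ℚ | r.num ∈ Set.Icc (-(4*(Q₀:ℤ))) (4*(Q₀:ℤ)) ∧ r.den ∈ Set.Iic Q₀}.Finite := by
    apply Set.Finite.of_finite_image (f := fun r : ℚ => (r.num, r.den))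
    · apply Set.Finite.subset (((Set.finite_Icc (-(4*(Q₀:ℤ))) (4*(Q₀:ℤ))).prod
        (Set.finite_Iic Q₀)))
      rintro ⟨p, d⟩ ⟨r, ⟨h1, h2⟩, heq⟩
      simp only [Prod.mk.injEq] at heq
      obtain ⟨e1, e2⟩ := heq
      subst e1; subst e2
      exact ⟨h1, h2⟩
    · intro s _ t _ h
      simp only [Prod.mk.injEq] at h
      exact Rat.ext h.1 h.2
  apply hfin.subset
  intro r hr
  have hr' : |Real.exp 1 - (r:ℝ)| < 1 / (r.den : ℝ) ^ ρ := hr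
  have hdenQ : r.den < Q₀ := claim r hr'
  have hd1 : (1:ℝ) ≤ (r.den : ℝ) := by exact_mod_cast r.pos
  have hd0 : (0:ℝ) < (r.den : ℝ) := by linarith
  have hρ0 : (0:ℝ) ≤ ρ := by linarith
  have hpow1 : (1:ℝ) ≤ (r.den : ℝ) ^ ρ := Real.one_le_rpow hd1 hρ0
  have habs1 : |Real.exp 1 - (r:ℝ)| < 1 := by
    apply lt_of_lt_of_le hr'
    rw [div_le_one (by positivity)]
    exact hpow1
  have hrabs : |(r:ℝ)| ≤ 4 := by
    have h1 : |(r:ℝ)| = |Real.exp 1 - (Real.exp 1 - (r:ℝ))| := by ring_nf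
    have h2 : |Real.exp 1 - (Real.exp 1 - (r:ℝ))| ≤ |Real.exp 1| + |Real.exp 1 - (r:ℝ)| :=
      abs_sub _ _
    have h3 : |Real.exp 1| ≤ 3 := by
      rw [abs_of_pos (Real.exp_pos 1)]
      exact exp_one_le_three
    linarith
  have hnumabs : |(r.num : ℝ)| ≤ 4 * Q₀ := by
    have h1 : |(r.num : ℝ)| = |(r:ℝ)| * r.den := by
      rw [Rat.cast_def, abs_div, abs_of_pos hd0]
      field_simp
    rw [h1]
    have h2 : (r.den : ℝ) ≤ Q₀ := by exact_mod_cast hdenQ.le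
    exact mul_le_mul hrabs h2 hd0.le (by norm_num)
  constructor
  · have : |r.num| ≤ 4 * (Q₀:ℤ) := by exact_mod_cast hnumabs
    rw [Set.mem_Icc]
    constructor <;> [linarith [neg_abs_le r.num]; linarith [le_abs_self r.num]]
  · exact Set.mem_Iic.mpr hdenQ.le


end MuE

/-- The irrationality exponent of `e` equals `2`. -/
theorem mu_e_eq_two : mu (Real.exp 1) = 2 := by
  rw [mu]
  apply le_antisymm
  · apply sSup_le
    rintro y ⟨ρ, hρmem, rfl⟩
    have hle : ρ ≤ 2 := by
      by_contra hcon
      push_neg at hcon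
      exact (MuE.finite_of_gt_two hcon).not_infinite hρmem
    show (ρ : EReal) ≤ 2
    have h2 : ((2:ℝ) : EReal) = (2 : EReal) := rfl
    rw [← h2]
    exact_mod_cast hle
  · apply le_sSup
    refine ⟨2, ?_, rfl⟩
    show {r : ℚ | |Real.exp 1 - (r:ℝ)| < 1 / (r.den : ℝ) ^ (2:ℝ)}.Infinite
    have h := Real.infinite_rat_abs_sub_lt_one_div_den_sq_of_irrational MuE.irrational_e
    have hset : {r : ℚ | |Real.exp 1 - (r:ℝ)| < 1 / (r.den : ℝ) ^ (2:ℝ)}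
        = {r : ℚ | |Real.exp 1 - (r:ℝ)| < 1 / (r.den : ℝ) ^ 2} := by
      ext r
      rw [Set.mem_setOf_eq, Set.mem_setOf_eq, Real.rpow_two]
    rw [hset]
    exact h


end
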